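/- For a birth-death chain on ℕ absorbed at 0 with up-probability p₁ = 2λ/(1+3λ) from state 1 and p = λ/(1+λ) from states k ≥ 2 (λ > 1), and A a contiguous block of |A| ≥ 1 sites, the absorption probability starting from state |A| equals ((λ+1)/(3λ−1))·(1/λ)^{|A|−1}. -/

import Mathlib

/-- For the birth-death chain on ℕ absorbed at 0 with up-probability `2λ/(1+3λ)` from
state 1 and `λ/(1+λ)` from every state `k ≥ 2` (λ > 1), the absorption probability
(minimal nonnegative solution of the harmonic equations with boundary value 1 at 0)
starting from a state `n = |A| ≥ 1` equals `((λ+1)/(3λ−1))·(1/λ)^{n−1}`. -/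
theorem stmt_17 (lam : ℝ) (hlam : 1 < lam)
    (p : ℕ → ℝ) (hp1 : p 1 = 2 * lam / (1 + 3 * lam))
    (hpk : ∀ k, 2 ≤ k → p k = lam / (1 + lam))
    (h : ℕ → ℝ)
    (h0 : h 0 = 1)
    (hrec : ∀ k, 1 ≤ k → h k = p k * h (k + 1) + (1 - p k) * h (k - 1))
    (hnonneg : ∀ k, 0 ≤ h k)
    (hmin : ∀ g : ℕ → ℝ, g 0 = 1 →
      (∀ k, 1 ≤ k → g k = p k * g (k + 1) + (1 - p k) * g (k - 1)) →
      (∀ k, 0 ≤ g k) → ∀ k, h k ≤ g k) :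
    ∀ n, 1 ≤ n → h n = ((lam + 1) / (3 * lam - 1)) * (1 / lam) ^ (n - 1) := by
  have hl0 : (0:ℝ) < lam := by linarith
  have hl : lam ≠ 0 := ne_of_gt hl0
  have h1l : (1:ℝ) + lam ≠ 0 := by positivity
  have h13 : (1:ℝ) + 3 * lam ≠ 0 := by positivity
  have h3l1 : (0:ℝ) < 3 * lam - 1 := by linarith
  have h3l1' : 3 * lam - 1 ≠ 0 := ne_of_gt h3l1
  have hlm1 : lam - 1 ≠ 0 := by intro hc; nlinarith [hc]
  set x : ℝ := 1 / lam with hxdef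
  have hx0 : 0 < x := by positivity
  have hx1 : x < 1 := by
    rw [hxdef]
    exact (div_lt_one hl0).mpr hlam
  have hlx : lam * x = 1 := by rw [hxdef]; field_simp
  set C : ℝ := (lam + 1) / (3 * lam - 1) with hCdef
  have hC0 : 0 < C := by rw [hCdef]; positivity
  have hC1 : C < 1 := by rw [hCdef]; rw [div_lt_one h3l1]; linarith
  -- define the candidate g
  set g : ℕ → ℝ := fun k => if k = 0 then 1 else C * x ^ (k - 1) with hgdef
  have hg0 : g 0 = 1 := rfl
  have hgk : ∀ k, 1 ≤ k → g k = C * x ^ (k - 1) := by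
    intro k hk
    simp only [hgdef]
    rw [if_neg (by omega : ¬ k = 0)]
  have hgrec : ∀ k, 1 ≤ k → g k = p k * g (k + 1) + (1 - p k) * g (k - 1) := by
    intro k hk
    rcases Nat.lt_or_ge k 2 with hk2 | hk2
    · have : k = 1 := by omega
      subst this
      rw [show (1:ℕ) - 1 = 0 from rfl, hgk 1 le_rfl, hgk 2 (by norm_num), hg0, hp1]
      rw [show (2:ℕ) - 1 = 1 from rfl, show (1:ℕ) - 1 = 0 from rfl]
      rw [pow_zero, pow_one, hxdef, hCdef]
      field_simp
      have h3'' : lam * 3 - 1 ≠ 0 := by intro hc; linarith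
      rw [div_add' _ _ _ h3'', div_left_inj' h3'']
      ring
    · obtain ⟨m, rfl⟩ : ∃ m, k = m + 2 := ⟨k - 2, by omega⟩
      rw [show (m+2:ℕ) - 1 = m + 1 from rfl, hgk (m+2) (by omega),
        hgk (m+2+1) (by omega), hgk (m+1) (by omega), hpk _ (by omega)]
      rw [show (m+2:ℕ) - 1 = m + 1 from rfl, show (m+2+1:ℕ) - 1 = m + 2 from rfl,
        show (m+1:ℕ) - 1 = m from rfl]
      rw [show x ^ (m+1) = x ^ m * x from pow_succ x m,
        show x ^ (m+2) = x ^ m * x * x from by rw [pow_succ, pow_succ]]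
      rw [hxdef]
      field_simp
      ring
  have hgnn : ∀ k, 0 ≤ g k := by
    intro k
    rcases Nat.eq_zero_or_pos k with rfl | hk
    · rw [hg0]; norm_num
    · rw [hgk k hk]; positivity
  have hle := hmin g hg0 hgrec hgnn
  -- the explicit form of h
  set B : ℝ := lam ^ 2 * (h 1 - h 2) / (lam - 1) with hBdef
  set A : ℝ := h 1 - B * x with hAdef
  have key : ∀ k : ℕ, h (k + 1) = A + B * x ^ (k + 1) ∧ h (k + 2) = A + B * x ^ (k + 2) := by
    intro k
    induction k with
    | zero =>
      constructor
      · rw [hAdef]; ring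
      · rw [hAdef, hBdef, hxdef]; simp only [zero_add]; field_simp; ring
    | succ m ih =>
      refine ⟨ih.2, ?_⟩
      have e := hrec (m + 2) (by omega)
      rw [hpk _ (by omega), show (m+2:ℕ) - 1 = m + 1 from rfl] at e
      have hlam' : lam * h (m + 2 + 1) = (1 + lam) * h (m + 2) - h (m + 1) := by
        field_simp at e
        linarith [e]
      rw [ih.1, ih.2] at hlam'
      have hx2 : x ^ (m + 2) = lam * x ^ (m + 2 + 1) := by
        rw [pow_succ]
        calc x ^ (m+2) = (lam * x) * x ^ (m+2) := by rw [hlx]; ring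
        _ = lam * (x ^ (m+2) * x) := by ring
      have hx1' : x ^ (m + 1) = lam * (lam * x ^ (m + 2 + 1)) := by
        rw [← hx2, pow_succ]
        calc x ^ (m+1) = (lam * x) * x ^ (m+1) := by rw [hlx]; ring
        _ = lam * (x ^ (m+1) * x) := by ring
      have hfin : lam * h (m + 2 + 1) = lam * (A + B * x ^ (m + 2 + 1)) := by
        rw [hlam', hx1', hx2]; ring
      exact mul_left_cancel₀ hl hfin
  -- limit argument : A ≥ 0
  have htend : Filter.Tendsto h Filter.atTop (nhds A) := by
    have h1 : Filter.Tendsto (fun k : ℕ => A + B * x ^ k) Filter.atTop (nhds (A + B * 0)) :=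
      Filter.Tendsto.add tendsto_const_nhds
        (Filter.Tendsto.mul tendsto_const_nhds
          (tendsto_pow_atTop_nhds_zero_of_lt_one (le_of_lt hx0) hx1))
    rw [mul_zero, add_zero] at h1
    refine h1.congr' ?_
    filter_upwards [Filter.eventually_ge_atTop 1] with k hk
    obtain ⟨m, rfl⟩ : ∃ m, k = m + 1 := ⟨k - 1, by omega⟩
    exact ((key m).1).symm
  have hA0 : 0 ≤ A := ge_of_tendsto' htend fun k => hnonneg k
  -- constraint from the recurrence at k = 1
  have hcon : B * x = (1 - A) * C := by
    have e := hrec 1 le_rfl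
    rw [hp1, show (1:ℕ) - 1 = 0 from rfl, h0] at e
    have h1f : h 1 = A + B * x := by
      have := (key 0).1; rw [pow_one] at this; exact this
    have h2f : h 2 = A + B * (x * x) := by
      have := (key 0).2; rw [show (0:ℕ)+2 = 2 from rfl, sq] at this; exact this
    rw [h1f, h2f, hxdef] at e
    field_simp at e
    have heq : lam ^ 2 * (1 + 3 * lam) ^ 2 * (B * (3 * lam - 1))
        = lam ^ 2 * (1 + 3 * lam) ^ 2 * ((1 - A) * ((lam + 1) * lam)) := by
      linear_combination lam ^ 2 * (1 + 3 * lam) ^ 2 * e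
    have hcc := mul_left_cancel₀
      (show (lam ^ 2 * (1 + 3 * lam) ^ 2 : ℝ) ≠ 0 by positivity) heq
    rw [hxdef, hCdef]
    field_simp
    have h3'' : lam * 3 - 1 ≠ 0 := by intro hc; linarith
    rw [eq_div_iff h3'']
    linear_combination hcc
  -- A ≤ 0 from minimality
  have hAle : A ≤ 0 := by
    have h1f : h 1 = A + B * x := by
      have := (key 0).1; rw [pow_one] at this; exact this
    have hg1 : g 1 = C := by rw [hgk 1 le_rfl]; simp
    have hh := hle 1
    rw [h1f, hg1, hcon] at hh
    nlinarith [hh, hC1]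
  have hA : A = 0 := le_antisymm hAle hA0
  have hBx : B * x = C := by rw [hcon, hA]; ring
  intro n hn
  obtain ⟨m, rfl⟩ : ∃ m, n = m + 1 := ⟨n - 1, by omega⟩
  have hm := (key m).1
  rw [hm, hA, zero_add, show (m+1:ℕ) - 1 = m from rfl, pow_succ]
  linear_combination x ^ m * hBx
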